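/- The only rational point (u, v) ∈ ℚ² on the elliptic curve v² = u³ + u is (0, 0). -/

import Mathlib

theorem stmt_13 (u v : ℚ) :
    v ^ 2 = u ^ 3 + u ↔ u = 0 ∧ v = 0 := by
  constructor
  · intro h
    set p := u.num with hp
    set q := (u.den : ℤ) with hq
    set s := v.num with hs
    set t := (v.den : ℤ) with ht
    have hq0 : q ≠ 0 := Int.natCast_ne_zero.mpr u.den_nz
    have ht0 : t ≠ 0 := Int.natCast_ne_zero.mpr v.den_nz
    have hqpos : 0 < q := Int.natCast_pos.mpr u.pos
    have htpos : 0 < t := Int.natCast_pos.mpr v.pos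
    have hcpq : IsCoprime p q := by
      rw [Int.isCoprime_iff_gcd_eq_one]; exact u.reduced
    have hcst : IsCoprime s t := by
      rw [Int.isCoprime_iff_gcd_eq_one]; exact v.reduced
    -- the integer equation
    have key : s ^ 2 * q ^ 3 = t ^ 2 * (p * (p ^ 2 + q ^ 2)) := by
      have hu : (p : ℚ) / q = u := Rat.num_div_den u
      have hv : (s : ℚ) / t = v := Rat.num_div_den v
      have hq0' : (q : ℚ) ≠ 0 := Int.cast_ne_zero.mpr hq0
      have ht0' : (t : ℚ) ≠ 0 := Int.cast_ne_zero.mpr ht0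
      rw [← hu, ← hv] at h
      field_simp at h
      have h2 : ((s ^ 2 * q ^ 3 * q : ℤ) : ℚ) = ((t ^ 2 * (p * (p ^ 2 + q ^ 2)) * q : ℤ) : ℚ) := by
        push_cast
        linear_combination (q : ℚ) * h
      have h3 : s ^ 2 * q ^ 3 * q = t ^ 2 * (p * (p ^ 2 + q ^ 2)) * q := by exact_mod_cast h2
      exact mul_right_cancel₀ hq0 h3
    -- coprimality of q with p*(p^2+q^2)
    have hcq : IsCoprime q (p * (p ^ 2 + q ^ 2)) := by
      have h1 : IsCoprime q p := hcpq.symm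
      have h2 : IsCoprime q (p ^ 2 + q ^ 2) := by
        have h3 : IsCoprime q (p ^ 2) := h1.pow_right
        simpa [sq] using h3.add_mul_left_right q
      exact h1.mul_right h2
    -- t^2 = q^3
    have htq : t ^ 2 = q ^ 3 := by
      have h1 : t ^ 2 ∣ q ^ 3 := by
        have : t ^ 2 ∣ s ^ 2 * q ^ 3 := ⟨p * (p ^ 2 + q ^ 2), key.symm ▸ by ring⟩
        exact (hcst.symm.pow (m := 2) (n := 2)).dvd_of_dvd_mul_left this
      have h2 : q ^ 3 ∣ t ^ 2 := by
        have : q ^ 3 ∣ t ^ 2 * (p * (p ^ 2 + q ^ 2)) := ⟨s ^ 2, by linarith [key]⟩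
        exact ((hcq.pow (m := 3) (n := 1)).dvd_of_dvd_mul_right (by simpa using this))
      exact Int.dvd_antisymm (by positivity) (by positivity) h1 h2
    have key2 : s ^ 2 = p * (p ^ 2 + q ^ 2) := by
      have hq3 : q ^ 3 ≠ 0 := pow_ne_zero _ hq0
      have := key
      rw [htq] at this
      exact mul_right_cancel₀ hq3 (by linarith [this])
    by_cases hs0 : s = 0
    · -- then p = 0, so u = 0 and v = 0
      have hpq2 : 0 < p ^ 2 + q ^ 2 := by positivity
      have hp0 : p = 0 := by
        rcases mul_eq_zero.mp (by rw [← key2, hs0]; ring) with h' | h'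
        · exact h'
        · omega
      constructor
      · exact Rat.num_eq_zero.mp hp0
      · exact Rat.num_eq_zero.mp hs0
    · exfalso
      have hppos : 0 < p := by
        have h1 : 0 < s ^ 2 := by positivity
        have h2 : 0 < p ^ 2 + q ^ 2 := by positivity
        nlinarith [key2]
      -- p and p^2+q^2 are coprime
      have hc2 : IsCoprime p (p ^ 2 + q ^ 2) := by
        have h3 : IsCoprime p (q ^ 2) := hcpq.pow_right
        have h4 := h3.add_mul_left_right p
        simpa [sq, add_comm] using h4
      -- both are squares
      obtain ⟨a, ha⟩ := Int.sq_of_isCoprime hc2 key2.symm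
      have hpa : p = a ^ 2 := by
        rcases ha with h' | h'
        · exact h'
        · nlinarith [sq_nonneg a]
      obtain ⟨b, hb⟩ := Int.sq_of_isCoprime hc2.symm (by rw [mul_comm]; exact key2.symm)
      have hpb : p ^ 2 + q ^ 2 = b ^ 2 := by
        rcases hb with h' | h'
        · exact h'
        · nlinarith [sq_nonneg b, sq_nonneg p, sq_nonneg q]
      -- q is a square
      have hqt : q ∣ t := by
        rw [← Int.pow_dvd_pow_iff (two_ne_zero), htq]
        exact ⟨q, by ring⟩
      obtain ⟨k, hk⟩ := hqt
      have hqk : q = k ^ 2 := by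
        have : q ^ 2 * q = q ^ 2 * k ^ 2 := by
          linear_combination (-1) * htq + (t + q * k) * hk
        exact mul_left_cancel₀ (pow_ne_zero _ hq0) this
      have ha0 : a ≠ 0 := by
        intro h'; rw [h'] at hpa; simp at hpa; omega
      have hk0 : k ≠ 0 := by
        intro h'; rw [h'] at hqk; simp at hqk; omega
      exact not_fermat_42 ha0 hk0 (c := b) (by rw [← hpb, hpa, hqk]; ring)
  · rintro ⟨hu, hv⟩
    rw [hu, hv]; ring
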